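/- Let w ∈ ℝᴺ with wᵢ > 0 and ∑ᵢ wᵢ = 1, and let T ≥ 1. Define the tempered weights w̃ᵢ = wᵢ^(1/T) / ∑ⱼ wⱼ^(1/T). Then w̃ is a probability vector, and the Shannon entropy satisfies H(w̃) ≥ H(w), with equality when T = 1. -/
import Mathlib

/-- Gibbs' inequality: cross "log-sum" bound. -/
lemma gibbs_aux {N : ℕ} (p q : Fin N → ℝ) (hp : ∀ i, 0 < p i) (hq : ∀ i, 0 < q i)
    (hps : ∑ i, p i = 1) (hqs : ∑ i, q i = 1) :
    ∑ i, p i * Real.log (q i) ≤ ∑ i, p i * Real.log (p i) := by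
  have h : ∑ i, p i * (Real.log (q i) - Real.log (p i)) ≤ 0 := by
    calc ∑ i, p i * (Real.log (q i) - Real.log (p i))
        ≤ ∑ i, (q i - p i) := by
          apply Finset.sum_le_sum
          intro i _
          have hlog := Real.log_le_sub_one_of_pos (div_pos (hq i) (hp i))
          rw [Real.log_div (hq i).ne' (hp i).ne'] at hlog
          have := mul_le_mul_of_nonneg_left hlog (hp i).le
          calc p i * (Real.log (q i) - Real.log (p i)) ≤ p i * (q i / p i - 1) := this
            _ = q i - p i := by
                rw [mul_sub, mul_one, mul_div_cancel₀ _ (hp i).ne']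
      _ = 0 := by rw [Finset.sum_sub_distrib, hps, hqs]; ring
  have hsplit : ∑ i, p i * (Real.log (q i) - Real.log (p i))
      = (∑ i, p i * Real.log (q i)) - (∑ i, p i * Real.log (p i)) := by
    rw [← Finset.sum_sub_distrib]
    exact Finset.sum_congr rfl fun i _ => by ring
  linarith [hsplit ▸ h]

/-- Tempering weights with temperature T ≥ 1 never decreases the Shannon
entropy, with equality when T = 1. -/
theorem tempering_increases_entropy {N : ℕ} (hN : 1 ≤ N) (w : Fin N → ℝ)
    (hw_pos : ∀ i, 0 < w i) (hw_sum : ∑ i, w i = 1) (T : ℝ) (hT : 1 ≤ T) :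
    (let wt : Fin N → ℝ := fun i => w i ^ (1 / T) / ∑ j, w j ^ (1 / T)
    (∀ i, 0 ≤ wt i) ∧ (∑ i, wt i = 1) ∧
      (-∑ i, w i * Real.log (w i)) ≤ (-∑ i, wt i * Real.log (wt i)) ∧
      (T = 1 → (-∑ i, wt i * Real.log (wt i)) = (-∑ i, w i * Real.log (w i)))) := by
  have hT0 : 0 < T := lt_of_lt_of_le one_pos hT
  set β : ℝ := 1 / T with hβ
  have hβ0 : 0 < β := by positivity
  have hβ1 : β ≤ 1 := by
    rw [hβ, div_le_one hT0]; exact hT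
  set Z : ℝ := ∑ j, w j ^ β with hZdef
  have hZ0 : 0 < Z := by
    apply Finset.sum_pos
    · intro i _; exact Real.rpow_pos_of_pos (hw_pos i) β
    · have : Nonempty (Fin N) := Fin.pos_iff_nonempty.mp hN
      exact Finset.univ_nonempty
  set q : Fin N → ℝ := fun i => w i ^ β / Z with hqdef
  have hq_pos : ∀ i, 0 < q i := fun i => div_pos (Real.rpow_pos_of_pos (hw_pos i) β) hZ0
  have hq_sum : ∑ i, q i = 1 := by
    show (∑ i, w i ^ β / Z) = 1
    rw [← Finset.sum_div, ← hZdef, div_self hZ0.ne']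
  have hlogq : ∀ i, Real.log (q i) = β * Real.log (w i) - Real.log Z := fun i => by
    show Real.log (w i ^ β / Z) = _
    rw [Real.log_div (Real.rpow_pos_of_pos (hw_pos i) β).ne' hZ0.ne',
      Real.log_rpow (hw_pos i)]
  set A : ℝ := ∑ i, w i * Real.log (w i) with hA
  set B : ℝ := ∑ i, q i * Real.log (w i) with hB
  have id1 : ∑ i, w i * Real.log (q i) = β * A - Real.log Z := by
    have step : ∀ i : Fin N, w i * Real.log (q i)
        = β * (w i * Real.log (w i)) - Real.log Z * w i := fun i => by
      rw [hlogq i]; ring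
    rw [Finset.sum_congr rfl fun i _ => step i, Finset.sum_sub_distrib,
      ← Finset.mul_sum, ← Finset.mul_sum, ← hA, hw_sum, mul_one]
  have id2 : ∑ i, q i * Real.log (q i) = β * B - Real.log Z := by
    have step : ∀ i : Fin N, q i * Real.log (q i)
        = β * (q i * Real.log (w i)) - Real.log Z * q i := fun i => by
      rw [hlogq i]; ring
    rw [Finset.sum_congr rfl fun i _ => step i, Finset.sum_sub_distrib,
      ← Finset.mul_sum, ← Finset.mul_sum, ← hB, hq_sum, mul_one]
  have g1 : ∑ i, w i * Real.log (q i) ≤ A :=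
    gibbs_aux w q hw_pos hq_pos hw_sum hq_sum
  have g2 : B ≤ ∑ i, q i * Real.log (q i) :=
    gibbs_aux q w hq_pos hw_pos hq_sum hw_sum
  rw [id1] at g1
  rw [id2] at g2
  -- equality case machinery
  have hq_eq : β = 1 → Z = 1 ∧ q = w := by
    intro hb1
    have hZ1 : Z = 1 := by
      rw [hZdef]; simp only [hb1, Real.rpow_one]; exact hw_sum
    refine ⟨hZ1, funext fun i => ?_⟩
    show w i ^ β / Z = w i
    rw [hb1, Real.rpow_one, hZ1, div_one]
  have hmain : -A ≤ -∑ i, q i * Real.log (q i) := by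
    rw [id2]
    rcases eq_or_lt_of_le hβ1 with hb1 | hb1
    · obtain ⟨hZ1, hqw⟩ := hq_eq hb1
      have hAB' : A = B := by rw [hA, hB, hqw]
      rw [hZ1, Real.log_one, hb1, hAB']
      ring_nf
      exact le_refl _
    · have hAB : (β - 1) * A ≤ (β - 1) * B := by nlinarith
      have hBA : B ≤ A := by nlinarith
      nlinarith
  have heq : T = 1 → (-∑ i, q i * Real.log (q i)) = -A := by
    intro hT1
    have hb1 : β = 1 := by rw [hβ, hT1]; norm_num
    obtain ⟨hZ1, hqw⟩ := hq_eq hb1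
    rw [hqw, hA]
  exact ⟨fun i => (hq_pos i).le, hq_sum, hmain, heq⟩
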